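/- arXiv:1009.2021 — 3 statements merged into one kernel-verified Lean document; each statement's English description precedes it below -/
import Mathlib

section
/- Let 𝒞 be a finite family of finite subsets of a set V and let t ∈ V. The following are equivalent: (i) there exists a set Γ ⊆ V with t ∉ Γ such that some c ∈ 𝒞 satisfies c ∩ Γ = ∅ and every c ∈ 𝒞 satisfies c ∩ (Γ ∪ {t}) ≠ ∅; (ii) there exists c ∈ 𝒞 with t ∈ c such that no c' ∈ 𝒞 satisfies c' ⊊ c. -/
/-- Let `𝒞` be a finite family of finite subsets of a set `V` and
`t ∈ V`. TFAE: (i) there exists `Γ ⊆ V` with `t ∉ Γ` such that some `c ∈ 𝒞` satisfies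
`c ∩ Γ = ∅` and every `c ∈ 𝒞` satisfies `c ∩ (Γ ∪ {t}) ≠ ∅`;
(ii) there exists `c ∈ 𝒞` with `t ∈ c` such that no `c' ∈ 𝒞` satisfies `c' ⊊ c`. -/
theorem statement1 {V : Type} [DecidableEq V] (𝒞 : Finset (Finset V)) (t : V) :
    (∃ Γ : Set V, t ∉ Γ ∧
        (∃ c ∈ 𝒞, ∀ x ∈ c, x ∉ Γ) ∧
        (∀ c ∈ 𝒞, ∃ x ∈ c, x ∈ Γ ∪ {t})) ↔
      ∃ c ∈ 𝒞, t ∈ c ∧ ∀ c' ∈ 𝒞, ¬ c' ⊂ c := by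
  constructor
  · rintro ⟨Γ, ht, ⟨c₀, hc₀, hdisj₀⟩, hall⟩
    -- pick a minimal-cardinality member disjoint from Γ
    classical
    have hne : (𝒞.filter (fun c => ∀ x ∈ c, x ∉ Γ)).Nonempty :=
      ⟨c₀, Finset.mem_filter.2 ⟨hc₀, hdisj₀⟩⟩
    obtain ⟨c, hc, hmin⟩ := (𝒞.filter (fun c => ∀ x ∈ c, x ∉ Γ)).exists_min_image
      Finset.card hne
    rw [Finset.mem_filter] at hc
    obtain ⟨hcC, hcd⟩ := hc
    refine ⟨c, hcC, ?_, ?_⟩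
    · obtain ⟨x, hx, hxΓ⟩ := hall c hcC
      rcases hxΓ with h | h
      · exact absurd h (hcd x hx)
      · rw [Set.mem_singleton_iff] at h; exact h ▸ hx
    · intro c' hc' hlt
      have hd' : ∀ x ∈ c', x ∉ Γ := fun x hx => hcd x (hlt.subset hx)
      have := hmin c' (Finset.mem_filter.2 ⟨hc', hd'⟩)
      exact absurd (Finset.card_lt_card hlt) (not_lt.2 this)
  · rintro ⟨c, hc, htc, hmin⟩
    refine ⟨{x | x ∉ c}, by simp [htc], ⟨c, hc, by simp⟩, ?_⟩
    intro c' hc'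
    by_cases hsub : c' ⊆ c
    · rcases eq_or_ne c' c with rfl | hne
      · exact ⟨t, htc, Or.inr rfl⟩
      · exact absurd (Finset.ssubset_iff_subset_ne.2 ⟨hsub, hne⟩) (hmin c' hc')
    · obtain ⟨x, hx, hxc⟩ := Finset.not_subset.1 hsub
      exact ⟨x, hx, Or.inl hxc⟩
end

section
/- Let m ≥ 9 be odd and divisible by 3, and let G_m be the local ring of length m. Then G_m has a minimum contingency consisting solely of forward edges, i.e., among the sets of edges that contain at least one edge of every directed cycle of length 3 and have minimum cardinality, there is one containing only forward edges. -/
/-- Vertices of the local ring of length `m`: `(j, true)` is `v_j^+` and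
`(j, false)` is `v_j^-`, with cyclic index `j : ZMod m`. -/
abbrev RingV (m : ℕ) := ZMod m × Bool

/-- The forward edges of the local ring: `(v_j^+, v_{j+1}^-)` and `(v_j^-, v_{j+1}^+)`,
indices taken cyclically modulo `m`. -/
def fwdEdges (m : ℕ) : Set (RingV m × RingV m) :=
  {e | ∃ (j : ZMod m) (s : Bool), e = ((j, s), (j + 1, !s))}

/-- The backward edges of the local ring: `(v_j^+, v_{j-2}^+)` and `(v_j^-, v_{j-2}^-)`,
indices taken cyclically modulo `m`. -/
def bwdEdges (m : ℕ) : Set (RingV m × RingV m) :=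
  {e | ∃ (j : ZMod m) (s : Bool), e = ((j, s), (j - 2, s))}

/-- The edge set of the local ring `G_m`. -/
def ringEdges (m : ℕ) : Set (RingV m × RingV m) := fwdEdges m ∪ bwdEdges m

/-- A contingency of a directed graph with edge set `E`: a set `Γ` of edges containing
at least one edge of every directed cycle of length 3. -/
def isContingency {V : Type} (E Γ : Set (V × V)) : Prop :=
  Γ ⊆ E ∧ ∀ u v w : V, u ≠ v → v ≠ w → u ≠ w →
    (u, v) ∈ E → (v, w) ∈ E → (w, u) ∈ E →
    ((u, v) ∈ Γ ∨ (v, w) ∈ Γ ∨ (w, u) ∈ Γ)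

/-- A minimum contingency: a contingency of minimum cardinality. -/
def isMinContingency {V : Type} (E Γ : Set (V × V)) : Prop :=
  isContingency E Γ ∧ ∀ Γ' : Set (V × V), isContingency E Γ' → Γ.ncard ≤ Γ'.ncard

/-- Let `m ≥ 9` be odd and divisible by 3, and let `G_m` be the local
ring of length `m`. Then `G_m` has a minimum contingency consisting solely of forward
edges. -/
theorem statement14 (m : ℕ) (hm : 9 ≤ m) (hodd : Odd m) (hdvd : 3 ∣ m) :
    ∃ Γ : Set (RingV m × RingV m),
      isMinContingency (ringEdges m) Γ ∧ Γ ⊆ fwdEdges m := by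
  haveI : NeZero m := ⟨by omega⟩
  have hz : ∀ k : ℕ, 0 < k → k < m → ((k : ZMod m) ≠ 0) := by
    intro k hk hkm h
    rw [ZMod.natCast_eq_zero_iff] at h
    have := Nat.le_of_dvd hk h
    omega
  have h2 : (2 : ZMod m) ≠ 0 := by
    have := hz 2 (by norm_num) (by omega); simpa using this
  have h6 : (6 : ZMod m) ≠ 0 := by
    have := hz 6 (by norm_num) (by omega); simpa using this
  -- the candidate contingency
  set Γ : Set (RingV m × RingV m) :=
      {e | ∃ j : ZMod m, e = ((j, true), (j + 1, false))} with hΓdef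
  have hΓsub : Γ ⊆ fwdEdges m := by
    rintro e ⟨j, rfl⟩
    exact ⟨j, true, rfl⟩
  -- classification of edges
  have step : ∀ u v : RingV m, (u, v) ∈ ringEdges m →
      v = (u.1 + 1, !u.2) ∨ v = (u.1 - 2, u.2) := by
    rintro u v (⟨j, t, h⟩ | ⟨j, t, h⟩) <;>
    · rw [Prod.mk.injEq] at h
      obtain ⟨rfl, rfl⟩ := h
      simp
  have hcont : isContingency (ringEdges m) Γ := by
    constructor
    · intro e he; exact Or.inl (hΓsub he)
    · rintro ⟨a, s⟩ v w _ _ _ e1 e2 e3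
      rcases step _ _ e1 with rfl | rfl <;>
        rcases step _ _ e2 with rfl | rfl <;>
          rcases step _ _ e3 with h3 | h3 <;>
            rw [Prod.mk.injEq] at h3 <;> obtain ⟨h31, h32⟩ := h3 <;>
              simp only at h31 h32
      -- FFF : parity contradiction
      · simp at h32
      -- FFB : real triangle
      · cases s
        · refine Or.inr (Or.inl ⟨a + 1, ?_⟩)
          simp [Prod.ext_iff]; try ring
        · exact Or.inl ⟨a, rfl⟩
      -- FBF : real triangle
      · cases s
        · refine Or.inr (Or.inr ⟨a + 1 - 2, ?_⟩)
          simp [Prod.ext_iff]; try ring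
        · exact Or.inl ⟨a, rfl⟩
      -- FBB : parity contradiction
      · simp at h32
      -- BFF : real triangle
      · cases s
        · refine Or.inr (Or.inr ⟨a - 2 + 1, ?_⟩)
          simp [Prod.ext_iff]; try ring
        · refine Or.inr (Or.inl ⟨a - 2, ?_⟩)
          simp [Prod.ext_iff]
      -- BFB : parity contradiction
      · simp at h32
      -- BBF : parity contradiction
      · simp at h32
      -- BBB : index contradiction
      · exact absurd (by linear_combination h31 : (6 : ZMod m) = 0) h6
  -- cardinality of Γ
  have cardΓ : Γ.ncard = m := by
    have hrange : Γ = Set.range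
        (fun j : ZMod m => (((j, true), (j + 1, false)) : RingV m × RingV m)) := by
      ext e; simp [hΓdef, Set.mem_range, eq_comm]
    have hinj : Function.Injective
        (fun j : ZMod m => (((j, true), (j + 1, false)) : RingV m × RingV m)) := by
      intro a b h
      exact congrArg (fun p => p.1.1) h
    rw [hrange, ← Nat.card_coe_set_eq, Nat.card_range_of_injective hinj,
      Nat.card_eq_fintype_card, ZMod.card]
  -- lower bound for arbitrary contingencies
  refine ⟨Γ, ⟨hcont, ?_⟩, hΓsub⟩
  intro Γ' hΓ'
  rw [cardΓ]
  -- the three edges of the triangle at position p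
  set E1 : ZMod m × Bool → (RingV m × RingV m) :=
      fun p => ((p.1, p.2), (p.1 + 1, !p.2)) with hE1
  set E2 : ZMod m × Bool → (RingV m × RingV m) :=
      fun p => ((p.1 + 1, !p.2), (p.1 + 2, p.2)) with hE2
  set E3 : ZMod m × Bool → (RingV m × RingV m) :=
      fun p => ((p.1 + 2, p.2), (p.1, p.2)) with hE3
  have key : ∀ p : ZMod m × Bool, ∃ e, e ∈ Γ' ∧ (e = E1 p ∨ e = E2 p ∨ e = E3 p) := by
    rintro ⟨j, s⟩
    have d1 : ((j, s) : RingV m) ≠ (j + 1, !s) := by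
      intro h; have := congrArg Prod.snd h; simp at this
    have d2 : ((j + 1, !s) : RingV m) ≠ (j + 2, s) := by
      intro h; have := congrArg Prod.snd h; simp at this
    have d3 : ((j, s) : RingV m) ≠ (j + 2, s) := by
      intro h
      have h' := congrArg Prod.fst h
      simp only at h'
      apply h2
      have : j + 2 = j + 0 := by rw [← h']; ring
      exact add_left_cancel this
    have m1 : (((j, s), (j + 1, !s)) : RingV m × RingV m) ∈ ringEdges m :=
      Or.inl ⟨j, s, rfl⟩
    have m2 : (((j + 1, !s), (j + 2, s)) : RingV m × RingV m) ∈ ringEdges m := by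
      refine Or.inl ⟨j + 1, !s, ?_⟩
      simp [Prod.ext_iff]; try ring
    have m3 : (((j + 2, s), (j, s)) : RingV m × RingV m) ∈ ringEdges m := by
      refine Or.inr ⟨j + 2, s, ?_⟩
      simp [Prod.ext_iff]; try ring
    rcases hΓ'.2 (j, s) (j + 1, !s) (j + 2, s) d1 d2 d3 m1 m2 m3 with h | h | h
    · exact ⟨_, h, Or.inl rfl⟩
    · exact ⟨_, h, Or.inr (Or.inl rfl)⟩
    · exact ⟨_, h, Or.inr (Or.inr rfl)⟩
  choose g hg1 hg2 using key
  -- injectivity facts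
  have inj1 : ∀ p q, E1 p = E1 q → p = q := by
    intro p q h
    have := congrArg Prod.fst h
    simpa [hE1, Prod.ext_iff] using this
  have inj2 : ∀ p q, E2 p = E2 q → p = q := by
    intro p q h
    have := congrArg Prod.snd h
    simp only [hE2, Prod.ext_iff] at this
    obtain ⟨h1, h2'⟩ := this
    exact Prod.ext (by exact add_right_cancel h1) h2'
  have inj3 : ∀ p q, E3 p = E3 q → p = q := by
    intro p q h
    have := congrArg Prod.snd h
    simpa [hE3, Prod.ext_iff] using this
  have inj23 : ∀ p q, E2 p = E3 q → False := by
    intro p q h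
    simp only [hE2, hE3, Prod.ext_iff] at h
    obtain ⟨⟨_, hb1⟩, ⟨_, hb2⟩⟩ := h
    rw [← hb2] at hb1
    simp at hb1
  -- the injection into Γ' × Bool
  haveI : Fintype ↥Γ' := Fintype.ofFinite _
  set φ : ZMod m × Bool → ↥Γ' × Bool :=
      fun p => (⟨g p, hg1 p⟩, decide (g p = E1 p)) with hφ
  have hφinj : Function.Injective φ := by
    intro p q h
    simp only [hφ, Prod.mk.injEq, Subtype.mk.injEq] at h
    obtain ⟨hgpq, htag⟩ := h
    by_cases hp1 : g p = E1 p
    · have hq1 : g q = E1 q := by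
        have : decide (g q = E1 q) = true := by
          rw [← htag]; exact decide_eq_true hp1
        exact of_decide_eq_true this
      exact inj1 p q (by rw [← hp1, ← hq1, hgpq])
    · have hq1 : ¬ (g q = E1 q) := by
        intro hq
        have : decide (g p = E1 p) = true := by
          rw [htag]; exact decide_eq_true hq
        exact hp1 (of_decide_eq_true this)
      rcases hg2 p with hp | hp | hp
      · exact absurd hp hp1
      all_goals rcases hg2 q with hq | hq | hq
      · exact absurd hq hq1
      · exact inj2 p q (by rw [← hp, ← hq, hgpq])
      · exact absurd (by rw [← hp, ← hq, hgpq] : E2 p = E3 q) (fun h => inj23 p q h)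
      · exact absurd hq hq1
      · exact absurd (by rw [← hq, ← hp, ← hgpq] : E2 q = E3 p) (fun h => inj23 q p h)
      · exact inj3 p q (by rw [← hp, ← hq, hgpq])
  have hcard := Fintype.card_le_of_injective φ hφinj
  simp only [Fintype.card_prod, Fintype.card_bool, ZMod.card] at hcard
  have : Γ'.ncard = Fintype.card ↥Γ' := by
    rw [← Nat.card_coe_set_eq, Nat.card_eq_fintype_card]
  omega
end

section
/- Let m ≥ 9 be odd and divisible by 3, and let G_m be the local ring of length m. Then the sets S⁺, consisting of all m forward edges of the form (v_j^+, v_{j+1}^-), and S⁻, consisting of all m forward edges of the form (v_j^-, v_{j+1}^+), are contingencies of G_m of size m, and they are the only two minimum contingencies of G_m that consist solely of forward edges. -/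
/-- `S⁺`: all `m` forward edges of the form `(v_j^+, v_{j+1}^-)`. -/
def Splus (m : ℕ) : Set (RingV m × RingV m) :=
  {e | ∃ j : ZMod m, e = ((j, true), (j + 1, false))}

/-- `S⁻`: all `m` forward edges of the form `(v_j^-, v_{j+1}^+)`. -/
def Sminus (m : ℕ) : Set (RingV m × RingV m) :=
  {e | ∃ j : ZMod m, e = ((j, false), (j + 1, true))}

namespace St15

variable {m : ℕ}

lemma two_ne (hm : 9 ≤ m) : (2 : ZMod m) ≠ 0 := by
  haveI : NeZero m := ⟨by omega⟩
  intro h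
  have h2 : ((2 : ℕ) : ZMod m) = 0 := by exact_mod_cast h
  rw [ZMod.natCast_eq_zero_iff] at h2
  have := Nat.le_of_dvd (by norm_num) h2
  omega

lemma six_ne (hm : 9 ≤ m) : (6 : ZMod m) ≠ 0 := by
  haveI : NeZero m := ⟨by omega⟩
  intro h
  have h2 : ((6 : ℕ) : ZMod m) = 0 := by exact_mod_cast h
  rw [ZMod.natCast_eq_zero_iff] at h2
  have := Nat.le_of_dvd (by norm_num) h2
  omega

lemma mem_fwd_iff {a b : ZMod m} {p q : Bool} :
    (((a, p), (b, q)) : RingV m × RingV m) ∈ fwdEdges m ↔ b = a + 1 ∧ q = !p := by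
  simp only [fwdEdges, Set.mem_setOf_eq, Prod.mk.injEq]
  constructor
  · rintro ⟨j, s, ⟨rfl, rfl⟩, rfl, rfl⟩; exact ⟨rfl, rfl⟩
  · rintro ⟨rfl, rfl⟩; exact ⟨a, p, ⟨rfl, rfl⟩, rfl, rfl⟩

lemma mem_bwd_iff {a b : ZMod m} {p q : Bool} :
    (((a, p), (b, q)) : RingV m × RingV m) ∈ bwdEdges m ↔ b = a - 2 ∧ q = p := by
  simp only [bwdEdges, Set.mem_setOf_eq, Prod.mk.injEq]
  constructor
  · rintro ⟨j, s, ⟨rfl, rfl⟩, rfl, rfl⟩; exact ⟨rfl, rfl⟩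
  · rintro ⟨rfl, rfl⟩; exact ⟨a, q, ⟨rfl, rfl⟩, rfl, rfl⟩

variable {m : ℕ}

def E1 (m : ℕ) (p : ZMod m × Bool) : RingV m × RingV m := ((p.1, p.2), (p.1 + 1, !p.2))
def E2 (m : ℕ) (p : ZMod m × Bool) : RingV m × RingV m := ((p.1 + 1, !p.2), (p.1 + 2, p.2))
def E3 (m : ℕ) (p : ZMod m × Bool) : RingV m × RingV m := ((p.1 + 2, p.2), (p.1, p.2))

def sig (m : ℕ) (p : ZMod m × Bool) : ZMod m × Bool := (p.1 + 1, !p.2)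

lemma E2_eq (p : ZMod m × Bool) : E2 m p = E1 m (sig m p) := by
  unfold E1 E2 sig
  refine Prod.ext_iff.mpr ⟨rfl, Prod.ext_iff.mpr ⟨by ring, (Bool.not_not _).symm⟩⟩

lemma E1_mem (p : ZMod m × Bool) : E1 m p ∈ fwdEdges m := ⟨p.1, p.2, rfl⟩

lemma E2_mem (p : ZMod m × Bool) : E2 m p ∈ fwdEdges m := by
  rw [E2_eq]; exact E1_mem _

lemma E3_mem (p : ZMod m × Bool) : E3 m p ∈ bwdEdges m := by
  refine ⟨p.1 + 2, p.2, ?_⟩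
  unfold E3
  refine Prod.ext_iff.mpr ⟨rfl, Prod.ext_iff.mpr ⟨by ring, rfl⟩⟩

lemma E1_inj : Function.Injective (E1 m) := by
  intro p q h
  simp only [E1, Prod.mk.injEq] at h
  exact Prod.ext_iff.mpr ⟨h.1.1, h.1.2⟩

/-- Every directed triangle is, up to rotation, a canonical triangle. -/
lemma tri (hm : 9 ≤ m) {u v w : RingV m}
    (h1 : (u, v) ∈ ringEdges m) (h2 : (v, w) ∈ ringEdges m) (h3 : (w, u) ∈ ringEdges m) :
    (v = (u.1 + 1, !u.2) ∧ w = (u.1 + 2, u.2)) ∨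
    (w = (v.1 + 1, !v.2) ∧ u = (v.1 + 2, v.2)) ∨
    (u = (w.1 + 1, !w.2) ∧ v = (w.1 + 2, w.2)) := by
  obtain ⟨a, p⟩ := u; obtain ⟨b, q⟩ := v; obtain ⟨c, r⟩ := w
  rw [ringEdges, Set.mem_union, mem_fwd_iff, mem_bwd_iff] at h1 h2 h3
  rcases h1 with ⟨hb, hq⟩ | ⟨hb, hq⟩ <;> rcases h2 with ⟨hc, hr⟩ | ⟨hc, hr⟩ <;>
    rcases h3 with ⟨ha, hp⟩ | ⟨ha, hp⟩
  · rw [hr, hq] at hp; simp at hp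
  · exact Or.inl ⟨Prod.ext_iff.mpr ⟨hb, hq⟩,
      Prod.ext_iff.mpr ⟨by linear_combination hc + hb, hp.symm⟩⟩
  · exact Or.inr (Or.inr ⟨Prod.ext_iff.mpr ⟨ha, hp⟩,
      Prod.ext_iff.mpr ⟨by linear_combination -hc, hr.symm⟩⟩)
  · rw [hr, hq] at hp; simp at hp
  · exact Or.inr (Or.inl ⟨Prod.ext_iff.mpr ⟨hc, hr⟩,
      Prod.ext_iff.mpr ⟨by linear_combination -hb, hq.symm⟩⟩)
  · rw [hr, hq] at hp; simp at hp
  · rw [hr, hq] at hp; simp at hp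
  · exact absurd (by linear_combination ha + hb + hc) (six_ne hm)

variable {m : ℕ}

lemma E1_ringmem (p : ZMod m × Bool) : E1 m p ∈ ringEdges m := Or.inl (E1_mem p)
lemma E2_ringmem (p : ZMod m × Bool) : E2 m p ∈ ringEdges m := Or.inl (E2_mem p)
lemma E3_ringmem (p : ZMod m × Bool) : E3 m p ∈ bwdEdges m ∪ fwdEdges m ∪ ∅ := by
  exact Or.inl (Or.inl (E3_mem p))

lemma E3_ringmem' (p : ZMod m × Bool) : E3 m p ∈ ringEdges m := Or.inr (E3_mem p)

/-- Every contingency contains an edge of each canonical triangle. -/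
lemma cover (hm : 9 ≤ m) {Γ : Set (RingV m × RingV m)}
    (hΓ : isContingency (ringEdges m) Γ) (p : ZMod m × Bool) :
    E1 m p ∈ Γ ∨ E2 m p ∈ Γ ∨ E3 m p ∈ Γ := by
  obtain ⟨j, s⟩ := p
  have hd1 : ((j, s) : RingV m) ≠ (j + 1, !s) := by
    intro h; have := (Prod.ext_iff.mp h).2; simp at this
  have hd2 : ((j + 1, !s) : RingV m) ≠ (j + 2, s) := by
    intro h; have := (Prod.ext_iff.mp h).2; simp at this
  have hd3 : ((j, s) : RingV m) ≠ (j + 2, s) := by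
    intro h
    have h1 := (Prod.ext_iff.mp h).1
    exact two_ne hm (by linear_combination -h1)
  exact hΓ.2 (j, s) (j + 1, !s) (j + 2, s) hd1 hd2 hd3
    (E1_ringmem (j, s)) (E2_ringmem (j, s)) (E3_ringmem' (j, s))

lemma splus_cont (hm : 9 ≤ m) : isContingency (ringEdges m) (Splus m) := by
  constructor
  · rintro e ⟨j, rfl⟩; exact Or.inl ⟨j, true, rfl⟩
  · intro u v w hd1 hd2 hd3 h1 h2 h3
    obtain ⟨a, p⟩ := u; obtain ⟨b, q⟩ := v; obtain ⟨c, r⟩ := w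
    rcases tri hm h1 h2 h3 with ⟨hv, hw⟩ | ⟨hw, hu⟩ | ⟨hu, hv⟩
    · injection hv with e1 e2; injection hw with e3 e4
      subst e1; subst e3; rw [e2, e4]
      cases p
      · exact Or.inr (Or.inl ⟨a + 1, Prod.ext_iff.mpr ⟨rfl, Prod.ext_iff.mpr ⟨by ring, rfl⟩⟩⟩)
      · exact Or.inl ⟨a, rfl⟩
    · injection hw with e1 e2; injection hu with e3 e4
      subst e1; subst e3; rw [e2, e4]
      cases q
      · exact Or.inr (Or.inr ⟨b + 1, Prod.ext_iff.mpr ⟨rfl, Prod.ext_iff.mpr ⟨by ring, rfl⟩⟩⟩)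
      · exact Or.inr (Or.inl ⟨b, rfl⟩)
    · injection hu with e1 e2; injection hv with e3 e4
      subst e1; subst e3; rw [e2, e4]
      cases r
      · exact Or.inl ⟨c + 1, Prod.ext_iff.mpr ⟨rfl, Prod.ext_iff.mpr ⟨by ring, rfl⟩⟩⟩
      · exact Or.inr (Or.inr ⟨c, rfl⟩)

lemma sminus_cont (hm : 9 ≤ m) : isContingency (ringEdges m) (Sminus m) := by
  constructor
  · rintro e ⟨j, rfl⟩; exact Or.inl ⟨j, false, rfl⟩
  · intro u v w hd1 hd2 hd3 h1 h2 h3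
    obtain ⟨a, p⟩ := u; obtain ⟨b, q⟩ := v; obtain ⟨c, r⟩ := w
    rcases tri hm h1 h2 h3 with ⟨hv, hw⟩ | ⟨hw, hu⟩ | ⟨hu, hv⟩
    · injection hv with e1 e2; injection hw with e3 e4
      subst e1; subst e3; rw [e2, e4]
      cases p
      · exact Or.inl ⟨a, rfl⟩
      · exact Or.inr (Or.inl ⟨a + 1, Prod.ext_iff.mpr ⟨rfl, Prod.ext_iff.mpr ⟨by ring, rfl⟩⟩⟩)
    · injection hw with e1 e2; injection hu with e3 e4
      subst e1; subst e3; rw [e2, e4]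
      cases q
      · exact Or.inr (Or.inl ⟨b, rfl⟩)
      · exact Or.inr (Or.inr ⟨b + 1, Prod.ext_iff.mpr ⟨rfl, Prod.ext_iff.mpr ⟨by ring, rfl⟩⟩⟩)
    · injection hu with e1 e2; injection hv with e3 e4
      subst e1; subst e3; rw [e2, e4]
      cases r
      · exact Or.inr (Or.inr ⟨c, rfl⟩)
      · exact Or.inl ⟨c + 1, Prod.ext_iff.mpr ⟨rfl, Prod.ext_iff.mpr ⟨by ring, rfl⟩⟩⟩

variable {m : ℕ}

lemma splus_eq_range : Splus m =
    Set.range (fun j : ZMod m => (((j, true), (j + 1, false)) : RingV m × RingV m)) := by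
  ext e; simp only [Splus, Set.mem_setOf_eq, Set.mem_range]
  exact ⟨fun ⟨j, h⟩ => ⟨j, h.symm⟩, fun ⟨j, h⟩ => ⟨j, h.symm⟩⟩

lemma sminus_eq_range : Sminus m =
    Set.range (fun j : ZMod m => (((j, false), (j + 1, true)) : RingV m × RingV m)) := by
  ext e; simp only [Sminus, Set.mem_setOf_eq, Set.mem_range]
  exact ⟨fun ⟨j, h⟩ => ⟨j, h.symm⟩, fun ⟨j, h⟩ => ⟨j, h.symm⟩⟩

lemma splus_card (hm : 9 ≤ m) : (Splus m).ncard = m := by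
  haveI : NeZero m := ⟨by omega⟩
  rw [splus_eq_range, ← Set.image_univ,
    Set.ncard_image_of_injective _ (fun a b h => by simpa using congrArg (fun e => e.1.1) h),
    Set.ncard_univ, Nat.card_eq_fintype_card, ZMod.card]

lemma sminus_card (hm : 9 ≤ m) : (Sminus m).ncard = m := by
  haveI : NeZero m := ⟨by omega⟩
  rw [sminus_eq_range, ← Set.image_univ,
    Set.ncard_image_of_injective _ (fun a b h => by simpa using congrArg (fun e => e.1.1) h),
    Set.ncard_univ, Nat.card_eq_fintype_card, ZMod.card]

/-- Any contingency has at least `m` edges. -/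
lemma lower (hm : 9 ≤ m) {Γ : Set (RingV m × RingV m)}
    (hΓ : isContingency (ringEdges m) Γ) : m ≤ Γ.ncard := by
  classical
  haveI : NeZero m := ⟨by omega⟩
  have hfin : Γ.Finite := Set.toFinite Γ
  set f : ZMod m × Bool → RingV m × RingV m := fun p =>
    if E1 m p ∈ Γ then E1 m p else if E2 m p ∈ Γ then E2 m p else E3 m p with hf
  have hfΓ : ∀ p, f p ∈ Γ := by
    intro p
    by_cases h1 : E1 m p ∈ Γ
    · simp [hf, h1]
    · by_cases h2 : E2 m p ∈ Γ
      · simp [hf, h1, h2]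
      · have h3 := (cover hm hΓ p).resolve_left h1 |>.resolve_left h2
        simp [hf, h1, h2, h3]
  have hf3 : ∀ p, f p = E1 m p ∨ f p = E2 m p ∨ f p = E3 m p := by
    intro p; simp only [hf]; split_ifs <;> simp
  have maps : ∀ p ∈ (Finset.univ : Finset (ZMod m × Bool)), f p ∈ hfin.toFinset := by
    intro p _; simpa using hfΓ p
  have fib : ∀ e ∈ hfin.toFinset, ({p ∈ (Finset.univ : Finset (ZMod m × Bool)) | f p = e}).card ≤ 2 := by
    intro e he
    rw [Set.Finite.mem_toFinset] at he
    rcases hΓ.1 he with hfwd | hbwd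
    · obtain ⟨j, s, rfl⟩ := hfwd
      have hsub : ({p ∈ (Finset.univ : Finset (ZMod m × Bool)) | f p = ((j, s), (j + 1, !s))})
          ⊆ {(j, s), (j - 1, !s)} := by
        intro p hp
        simp only [Finset.mem_filter, Finset.mem_univ, true_and] at hp
        rcases hf3 p with h | h | h <;> rw [h] at hp
        · -- E1 p = ((j,s),(j+1,!s)) : p = (j,s)
          simp only [E1, Prod.mk.injEq] at hp
          simp only [Finset.mem_insert, Finset.mem_singleton]
          exact Or.inl (Prod.ext_iff.mpr ⟨hp.1.1, hp.1.2⟩)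
        · -- E2 p = : p.1 + 1 = j, !p.2 = s
          simp only [E2, Prod.mk.injEq] at hp
          simp only [Finset.mem_insert, Finset.mem_singleton]
          refine Or.inr (Prod.ext_iff.mpr ⟨by linear_combination hp.1.1, ?_⟩)
          have := hp.1.2
          cases hps : p.2 <;> rw [hps] at this <;> simp at this <;> simp [← this]
        · -- E3 p : sign contradiction
          exfalso
          simp only [E3, Prod.mk.injEq] at hp
          have h1 := hp.1.2
          have h2 := hp.2.2
          rw [h1] at h2
          simp at h2
      calc ({p ∈ (Finset.univ : Finset (ZMod m × Bool)) | f p = ((j, s), (j + 1, !s))}).card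
          ≤ ({(j, s), (j - 1, !s)} : Finset (ZMod m × Bool)).card := Finset.card_le_card hsub
        _ ≤ 2 := (Finset.card_insert_le _ _).trans (by simp)
    · obtain ⟨j, s, rfl⟩ := hbwd
      have hsub : ({p ∈ (Finset.univ : Finset (ZMod m × Bool)) | f p = ((j, s), (j - 2, s))})
          ⊆ {(j - 2, s)} := by
        intro p hp
        simp only [Finset.mem_filter, Finset.mem_univ, true_and] at hp
        rcases hf3 p with h | h | h <;> rw [h] at hp
        · exfalso
          simp only [E1, Prod.mk.injEq] at hp
          have h1 := hp.1.2
          have h2 := hp.2.2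
          rw [h1] at h2
          simp at h2
        · exfalso
          simp only [E2, Prod.mk.injEq] at hp
          have h1 := hp.1.2
          have h2 := hp.2.2
          rw [h2] at h1
          simp at h1
        · simp only [E3, Prod.mk.injEq] at hp
          simp only [Finset.mem_singleton]
          refine Prod.ext_iff.mpr ⟨by linear_combination hp.1.1, hp.2.2⟩
      calc ({p ∈ (Finset.univ : Finset (ZMod m × Bool)) | f p = ((j, s), (j - 2, s))}).card
          ≤ ({(j - 2, s)} : Finset (ZMod m × Bool)).card := Finset.card_le_card hsub
        _ ≤ 2 := by simp
  have hmain := Finset.card_le_mul_card_image_of_maps_to maps 2 fib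
  rw [Finset.card_univ, Fintype.card_prod, ZMod.card, Fintype.card_bool] at hmain
  rw [Set.ncard_eq_toFinset_card Γ hfin]
  omega

variable {m : ℕ}

lemma sig_inj : Function.Injective (sig m) := by
  intro p q h
  simp only [sig, Prod.mk.injEq] at h
  refine Prod.ext_iff.mpr ⟨by linear_combination h.1, ?_⟩
  have := h.2
  cases hp : p.2 <;> cases hq : q.2 <;> rw [hp, hq] at this <;> simp_all

lemma uniq (hm : 9 ≤ m) (hodd : Odd m) {Γ : Set (RingV m × RingV m)}
    (hΓ : isMinContingency (ringEdges m) Γ) (hfwd : Γ ⊆ fwdEdges m) :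
    Γ = Splus m ∨ Γ = Sminus m := by
  classical
  haveI : NeZero m := ⟨by omega⟩
  have hcard : Γ.ncard = m :=
    le_antisymm (by simpa [splus_card hm] using hΓ.2 _ (splus_cont hm)) (lower hm hΓ.1)
  set A : Set (ZMod m × Bool) := {p | E1 m p ∈ Γ} with hAdef
  have hΓA : Γ = E1 m '' A := by
    ext e
    constructor
    · intro he
      obtain ⟨j, s, rfl⟩ := hfwd he
      exact ⟨(j, s), he, rfl⟩
    · rintro ⟨p, hp, rfl⟩; exact hp
  have hA : A.ncard = m := by
    rw [hΓA, Set.ncard_image_of_injective _ E1_inj] at hcard; exact hcard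
  have hE3 : ∀ p : ZMod m × Bool, E3 m p ∉ Γ := by
    intro p h
    obtain ⟨j, s, hjs⟩ := hfwd h
    simp only [E3, Prod.mk.injEq] at hjs
    have h1 := hjs.1.2
    have h2 := hjs.2.2
    rw [h1] at h2
    simp at h2
  have hcov : ∀ p : ZMod m × Bool, p ∈ A ∨ sig m p ∈ A := by
    intro p
    rcases cover hm hΓ.1 p with h | h | h
    · exact Or.inl h
    · right; rw [hAdef]; simpa [← E2_eq] using h
    · exact absurd h (hE3 p)
  have hAc : Aᶜ.ncard = m := by
    have := Set.ncard_add_ncard_compl A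
    rw [hA, Nat.card_eq_fintype_card, Fintype.card_prod, ZMod.card, Fintype.card_bool] at this
    omega
  have himg : sig m '' Aᶜ ⊆ A := by
    rintro _ ⟨p, hp, rfl⟩
    exact (hcov p).resolve_left hp
  have heq : sig m '' Aᶜ = A := by
    refine Set.eq_of_subset_of_ncard_le himg ?_
    rw [Set.ncard_image_of_injective _ sig_inj, hAc, hA]
  have halt : ∀ p : ZMod m × Bool, p ∈ A → sig m p ∉ A := by
    intro p hp hσ
    rw [← heq] at hσ
    obtain ⟨q, hq, he⟩ := hσ
    exact hq (sig_inj he ▸ hp)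
  have hstep : ∀ p : ZMod m × Bool, p ∈ A → ((p.1 + 2, p.2) : ZMod m × Bool) ∈ A := by
    intro p hp
    have h2 : sig m (sig m p) ∈ A := (hcov (sig m p)).resolve_left (halt p hp)
    have he : sig m (sig m p) = (p.1 + 2, p.2) :=
      Prod.ext_iff.mpr ⟨by simp only [sig]; ring, by simp [sig]⟩
    rwa [he] at h2
  have hne : A.Nonempty := by
    rw [← Set.ncard_pos]
    omega
  obtain ⟨⟨j0, s0⟩, h0⟩ := hne
  obtain ⟨t, ht⟩ := hodd
  have hall : ∀ j : ZMod m, ((j, s0) : ZMod m × Bool) ∈ A := by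
    have key : ∀ k : ℕ, ((j0 + 2 * (k : ZMod m), s0) : ZMod m × Bool) ∈ A := by
      intro k
      induction k with
      | zero => simpa using h0
      | succ n ih =>
        have := hstep _ ih
        rw [show ((j0 + 2 * ((n : ℕ) : ZMod m)), s0).1 + 2 = j0 + 2 * (((n + 1 : ℕ) : ZMod m))
          from by push_cast; ring] at this
        exact this
    intro j
    have h2t : (2 : ZMod m) * ((t + 1 : ℕ) : ZMod m) = 1 := by
      have h1 : ((2 * (t + 1) : ℕ) : ZMod m) = ((m + 1 : ℕ) : ZMod m) := by
        rw [show 2 * (t + 1) = m + 1 from by omega]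
      push_cast at h1
      rw [ZMod.natCast_self] at h1
      push_cast
      push_cast at h1
      linear_combination h1
    set k : ℕ := ((j - j0) * ((t + 1 : ℕ) : ZMod m)).val with hk
    have hcast : ((k : ℕ) : ZMod m) = (j - j0) * ((t + 1 : ℕ) : ZMod m) :=
      ZMod.natCast_zmod_val _
    have : j0 + 2 * (k : ZMod m) = j := by
      rw [hcast]
      calc j0 + 2 * ((j - j0) * ((t + 1 : ℕ) : ZMod m))
          = j0 + (j - j0) * ((2 : ZMod m) * ((t + 1 : ℕ) : ZMod m)) := by ring
        _ = j := by rw [h2t]; ring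
    rw [← this]
    exact key k
  have hnots : ∀ j : ZMod m, ((j, !s0) : ZMod m × Bool) ∉ A := by
    intro j h
    refine halt (j - 1, s0) (hall (j - 1)) ?_
    have he : sig m ((j - 1, s0) : ZMod m × Bool) = (j, !s0) :=
      Prod.ext_iff.mpr ⟨by simp only [sig]; ring, rfl⟩
    rwa [he]
  cases hs0 : s0
  · rw [hs0] at hall hnots
    right
    rw [hΓA]
    ext e
    constructor
    · rintro ⟨p, hp, rfl⟩
      cases hp2 : p.2
      · exact ⟨p.1, by simp [E1, hp2]⟩
      · exfalso
        have hpe : p = ((p.1, !false) : ZMod m × Bool) := Prod.ext_iff.mpr ⟨rfl, hp2⟩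
        rw [hpe] at hp
        exact hnots p.1 hp
    · rintro ⟨j, rfl⟩
      exact ⟨(j, false), hall j, rfl⟩
  · rw [hs0] at hall hnots
    left
    rw [hΓA]
    ext e
    constructor
    · rintro ⟨p, hp, rfl⟩
      cases hp2 : p.2
      · exfalso
        have hpe : p = ((p.1, !true) : ZMod m × Bool) := Prod.ext_iff.mpr ⟨rfl, hp2⟩
        rw [hpe] at hp
        exact hnots p.1 hp
      · exact ⟨p.1, by simp [E1, hp2]⟩
    · rintro ⟨j, rfl⟩
      exact ⟨(j, true), hall j, rfl⟩

end St15

/-- Let `m ≥ 9` be odd and divisible by 3, and let `G_m` be the local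
ring of length `m`. Then `S⁺` and `S⁻` are contingencies of `G_m` of size `m`, they are
minimum contingencies, and they are the only two minimum contingencies of `G_m`
consisting solely of forward edges. -/
theorem statement15 (m : ℕ) (hm : 9 ≤ m) (hodd : Odd m) (hdvd : 3 ∣ m) :
    isContingency (ringEdges m) (Splus m) ∧ (Splus m).ncard = m ∧
    isContingency (ringEdges m) (Sminus m) ∧ (Sminus m).ncard = m ∧
    isMinContingency (ringEdges m) (Splus m) ∧
    isMinContingency (ringEdges m) (Sminus m) ∧
    (∀ Γ : Set (RingV m × RingV m),
      isMinContingency (ringEdges m) Γ → Γ ⊆ fwdEdges m →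
      Γ = Splus m ∨ Γ = Sminus m) := by
  refine ⟨St15.splus_cont hm, St15.splus_card hm, St15.sminus_cont hm, St15.sminus_card hm,
    ⟨St15.splus_cont hm, fun Γ' hΓ' => by rw [St15.splus_card hm]; exact St15.lower hm hΓ'⟩,
    ⟨St15.sminus_cont hm, fun Γ' hΓ' => by rw [St15.sminus_card hm]; exact St15.lower hm hΓ'⟩,
    fun Γ hΓ hfwd => St15.uniq hm hodd hΓ hfwd⟩
end
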